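/- arXiv:1402.1526 — 3 statements merged into one kernel-verified Lean document; each statement's English description precedes it below -/
import Mathlib

section
/- In the query release zero-sum game where the data player chooses x ∈ X to minimize payoff A(x,q) = q(D) - q(x) and the query player chooses q ∈ Q to maximize it, if Q is closed under negation (for each q ∈ Q the query q̄ with q̄(x) = 1 - q(x) is also in Q), then the value of the game is 0. -/
open Finset

/-- In the query release zero-sum game with payoff `A(x,q) = q(D) - q(x)`, if the
finite nonempty query class `Q` (of `[0,1]`-valued linear queries) is closed under
negation, then the value of the game,
`min_{u ∈ Δ(X)} max_{w ∈ Δ(Q)} E_{x∼u,q∼w}[q(D) - q(x)]`, equals `0`. -/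
theorem stmt1 {X : Type*} [Fintype X] [Nonempty X]
    (D : Multiset X) (hD : D ≠ 0)
    (Q : Finset (X → ℝ)) (hQne : Q.Nonempty)
    (hQ01 : ∀ q ∈ Q, ∀ x, q x ∈ Set.Icc (0 : ℝ) 1)
    (hQneg : ∀ q ∈ Q, (fun x => 1 - q x) ∈ Q) :
    sInf ((fun u : X → ℝ =>
        sSup ((fun w : {q // q ∈ Q} → ℝ =>
            ∑ x : X, ∑ q : {q // q ∈ Q},
              u x * w q * ((D.map q.1).sum / D.card - q.1 x)) ''
          {w | (∀ q, 0 ≤ w q) ∧ ∑ q, w q = 1})) ''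
      {u | (∀ x, 0 ≤ u x) ∧ ∑ x, u x = 1}) = 0 := by
  classical
  have hcard0 : 0 < D.card := Multiset.card_pos.mpr hD
  have hnpos : (0:ℝ) < (D.card : ℝ) := by exact_mod_cast hcard0
  have hmap : ∀ q : X → ℝ, (D.map q).sum = ∑ x : X, (D.count x : ℝ) * q x := by
    intro q
    rw [Finset.sum_multiset_map_count,
      Finset.sum_subset (Finset.subset_univ _)
        (fun x _ hx => by
          simp [Multiset.count_eq_zero_of_notMem (by simpa using hx)])]
    simp [nsmul_eq_mul]
  have hcount : ∑ x : X, (D.count x : ℝ) = (D.card : ℝ) := by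
    have h := hmap (fun _ => 1)
    simpa using h.symm
  set c : {q // q ∈ Q} → ℝ := fun q => (D.map q.1).sum / (D.card : ℝ) with hc
  have hc01 : ∀ q : {q // q ∈ Q}, c q ∈ Set.Icc (0:ℝ) 1 := by
    intro q
    have h0 : (0:ℝ) ≤ (D.map q.1).sum := by
      rw [hmap]
      exact Finset.sum_nonneg fun x _ => mul_nonneg (by positivity) (hQ01 _ q.2 x).1
    have h1 : (D.map q.1).sum ≤ (D.card : ℝ) := by
      rw [hmap, ← hcount]
      refine Finset.sum_le_sum fun x _ => ?_
      have h2 := (hQ01 _ q.2 x).2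
      have h3 : (0:ℝ) ≤ (D.count x : ℝ) := Nat.cast_nonneg _
      nlinarith
    exact ⟨by positivity, by rw [hc]; exact (div_le_one hnpos).mpr h1⟩
  -- simplification of the payoff
  have hval : ∀ (u : X → ℝ), (∑ x, u x = 1) → ∀ w : {q // q ∈ Q} → ℝ,
      (∑ x : X, ∑ q : {q // q ∈ Q}, u x * w q * ((D.map q.1).sum / (D.card:ℝ) - q.1 x))
      = ∑ q : {q // q ∈ Q}, w q * (c q - ∑ x, u x * q.1 x) := by
    intro u hu w
    rw [Finset.sum_comm]
    refine Finset.sum_congr rfl fun q _ => ?_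
    have h : ∀ x ∈ Finset.univ, u x * w q * ((D.map q.1).sum / (D.card:ℝ) - q.1 x)
        = w q * (u x * c q - u x * q.1 x) := fun x _ => by rw [hc]; ring
    rw [Finset.sum_congr rfl h, ← Finset.mul_sum, Finset.sum_sub_distrib,
      ← Finset.sum_mul, hu, one_mul]
  -- the subtype of queries is a nonempty fintype
  obtain ⟨q₀, hq₀⟩ := hQne
  have hQcard : 0 < Q.card := Finset.card_pos.mpr ⟨q₀, hq₀⟩
  have hcardsub : (Fintype.card {q // q ∈ Q}) = Q.card := Fintype.card_coe Q
  -- membership of 0 in the outer set via the empirical distribution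
  set u₀ : X → ℝ := fun x => (D.count x : ℝ) / (D.card : ℝ) with hu₀
  have hu₀mem : u₀ ∈ {u : X → ℝ | (∀ x, 0 ≤ u x) ∧ ∑ x, u x = 1} := by
    constructor
    · intro x; positivity
    · rw [hu₀]
      simp only
      rw [← Finset.sum_div, hcount, div_self (ne_of_gt hnpos)]
  have hEu₀ : ∀ q : {q // q ∈ Q}, ∑ x, u₀ x * q.1 x = c q := by
    intro q
    show _ = (D.map q.1).sum / (D.card : ℝ)
    rw [hmap, Finset.sum_div]
    refine Finset.sum_congr rfl fun x _ => ?_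
    rw [hu₀]
    ring
  -- a simple distribution over queries: uniform
  set wu : {q // q ∈ Q} → ℝ := fun _ => 1 / (Q.card : ℝ) with hwu
  have hwumem : wu ∈ {w : {q // q ∈ Q} → ℝ | (∀ q, 0 ≤ w q) ∧ ∑ q, w q = 1} := by
    constructor
    · intro q; positivity
    · rw [hwu]
      simp only [Finset.sum_const, Finset.card_univ, hcardsub, nsmul_eq_mul]
      field_simp
  have hzero_mem : (0:ℝ) ∈ ((fun u : X → ℝ =>
        sSup ((fun w : {q // q ∈ Q} → ℝ =>
            ∑ x : X, ∑ q : {q // q ∈ Q},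
              u x * w q * ((D.map q.1).sum / D.card - q.1 x)) ''
          {w | (∀ q, 0 ≤ w q) ∧ ∑ q, w q = 1})) ''
      {u | (∀ x, 0 ≤ u x) ∧ ∑ x, u x = 1}) := by
    refine ⟨u₀, hu₀mem, ?_⟩
    have himg : ((fun w : {q // q ∈ Q} → ℝ =>
            ∑ x : X, ∑ q : {q // q ∈ Q},
              u₀ x * w q * ((D.map q.1).sum / D.card - q.1 x)) ''
          {w | (∀ q, 0 ≤ w q) ∧ ∑ q, w q = 1}) = {0} := by
      apply Set.eq_singleton_iff_nonempty_unique_mem.mpr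
      constructor
      · exact ⟨_, ⟨wu, hwumem, rfl⟩⟩
      · rintro v ⟨w, hw, rfl⟩
        beta_reduce
        rw [hval u₀ hu₀mem.2 w]
        refine Finset.sum_eq_zero fun q _ => ?_
        rw [hEu₀ q, sub_self, mul_zero]
    beta_reduce
    rw [himg, csSup_singleton]
  -- every element of the outer set is nonnegative
  have hnonneg : ∀ a ∈ ((fun u : X → ℝ =>
        sSup ((fun w : {q // q ∈ Q} → ℝ =>
            ∑ x : X, ∑ q : {q // q ∈ Q},
              u x * w q * ((D.map q.1).sum / D.card - q.1 x)) ''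
          {w | (∀ q, 0 ≤ w q) ∧ ∑ q, w q = 1})) ''
      {u | (∀ x, 0 ≤ u x) ∧ ∑ x, u x = 1}), (0:ℝ) ≤ a := by
    rintro a ⟨u, ⟨hu0, hu1⟩, rfl⟩
    -- the inner image is bounded above by 1
    have hbdd : BddAbove ((fun w : {q // q ∈ Q} → ℝ =>
            ∑ x : X, ∑ q : {q // q ∈ Q},
              u x * w q * ((D.map q.1).sum / D.card - q.1 x)) ''
          {w | (∀ q, 0 ≤ w q) ∧ ∑ q, w q = 1}) := by
      refine ⟨1, ?_⟩
      rintro v ⟨w, ⟨hw0, hw1⟩, rfl⟩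
      beta_reduce
      rw [hval u hu1 w]
      calc ∑ q : {q // q ∈ Q}, w q * (c q - ∑ x, u x * q.1 x)
          ≤ ∑ q : {q // q ∈ Q}, w q * 1 := by
            refine Finset.sum_le_sum fun q _ => ?_
            refine mul_le_mul_of_nonneg_left ?_ (hw0 q)
            have h1 : c q ≤ 1 := (hc01 q).2
            have h2 : 0 ≤ ∑ x, u x * q.1 x :=
              Finset.sum_nonneg fun x _ => mul_nonneg (hu0 x) (hQ01 _ q.2 x).1
            linarith
        _ = 1 := by simp only [mul_one]; exact hw1
    -- pick a query giving nonnegative payoff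
    set a₀ : ℝ := c ⟨q₀, hq₀⟩ - ∑ x, u x * q₀ x with ha₀
    -- for a query q in Q, the pure strategy on q has payoff c q - ∑ u x q x
    have hpure : ∀ q : {q // q ∈ Q},
        (c q - ∑ x, u x * q.1 x : ℝ) ∈ ((fun w : {q // q ∈ Q} → ℝ =>
            ∑ x : X, ∑ q : {q // q ∈ Q},
              u x * w q * ((D.map q.1).sum / D.card - q.1 x)) ''
          {w | (∀ q, 0 ≤ w q) ∧ ∑ q, w q = 1}) := by
      intro q
      refine ⟨fun q' => if q' = q then 1 else 0, ⟨fun q' => by positivity, by simp⟩, ?_⟩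
      beta_reduce
      rw [hval u hu1]
      simp
    -- negation query
    have hqneg : (fun x => 1 - q₀ x) ∈ Q := hQneg q₀ hq₀
    have hnegval : c ⟨_, hqneg⟩ - ∑ x, u x * (1 - q₀ x) = -a₀ := by
      have hcneg : c ⟨_, hqneg⟩ = 1 - c ⟨q₀, hq₀⟩ := by
        have e1 : (D.map (fun x => 1 - q₀ x)).sum = (D.card : ℝ) - (D.map q₀).sum := by
          rw [hmap, hmap, ← hcount, ← Finset.sum_sub_distrib]
          exact Finset.sum_congr rfl fun x _ => by ring
        show (D.map (fun x => 1 - q₀ x)).sum / (D.card:ℝ) = 1 - (D.map q₀).sum / (D.card:ℝ)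
        rw [e1, sub_div, div_self (ne_of_gt hnpos)]
      have hsum : ∑ x, u x * (1 - q₀ x) = 1 - ∑ x, u x * q₀ x := by
        simp_rw [mul_sub, mul_one]
        rw [Finset.sum_sub_distrib, hu1]
      rw [hcneg, hsum, ha₀]
      ring
    rcases le_or_gt 0 a₀ with h | h
    · exact le_trans h (le_csSup hbdd (hpure ⟨q₀, hq₀⟩))
    · have : (0:ℝ) ≤ -a₀ := by linarith
      refine le_trans this (le_csSup hbdd ?_)
      rw [← hnegval]
      exact hpure ⟨_, hqneg⟩
  exact le_antisymm (csInf_le ⟨0, hnonneg⟩ hzero_mem) (le_csInf ⟨0, hzero_mem⟩ hnonneg)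
end

section
/- If the query class Q is closed under negation and (u*, w*) is an α-approximate mixed Nash equilibrium of the query release game with payoff A(x,q) = q(D) - q(x), then for every query q ∈ Q, |q(u*) - q(D)| ≤ α, where q(u*) = E_{x∼u*}[q(x)]. -/
open Finset

lemma pure_strategy_bound {X : Type*} [Fintype X]
    (D : Multiset X) (Q : Finset (X → ℝ)) (α : ℝ)
    (ustar : X → ℝ) (hu1 : ∑ x, ustar x = 1)
    (heq1 : ∀ w : {q // q ∈ Q} → ℝ, (∀ q, 0 ≤ w q) → ∑ q, w q = 1 →
      ∑ x : X, ∑ q : {q // q ∈ Q},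
        ustar x * w q * ((D.map q.1).sum / D.card - q.1 x) ≤ 0 + α)
    (q : X → ℝ) (hq : q ∈ Q) :
    (D.map q).sum / D.card - ∑ x : X, ustar x * q x ≤ α := by
  set qq : {q // q ∈ Q} := ⟨q, hq⟩
  have h := heq1 (fun q' => if q' = qq then 1 else 0)
    (fun q' => by positivity) (by simp)
  have hcollapse : ∀ x : X, ∑ q' : {q // q ∈ Q},
      ustar x * (if q' = qq then 1 else 0) * ((D.map q'.1).sum / D.card - q'.1 x)
      = ustar x * ((D.map q).sum / D.card - q x) := by
    intro x
    rw [Fintype.sum_eq_single qq]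
    · simp [qq]
    · intro b hb; simp [hb]
  rw [Finset.sum_congr rfl (fun x _ => hcollapse x)] at h
  have : ∑ x : X, ustar x * ((D.map q).sum / D.card - q x)
      = (D.map q).sum / D.card - ∑ x : X, ustar x * q x := by
    simp only [mul_sub]
    rw [Finset.sum_sub_distrib, ← Finset.sum_mul, hu1, one_mul]
  linarith [h, this.symm.trans_le h]

/-- If the query class `Q` is closed under negation and `(u*, w*)` is an
`α`-approximate mixed Nash equilibrium of the query release game with payoff
`A(x,q) = q(D) - q(x)` (whose value is `0`), then every query `q ∈ Q` satisfies
`|q(u*) - q(D)| ≤ α`, where `q(u*) = E_{x ∼ u*}[q(x)]`. -/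
theorem stmt2 {X : Type*} [Fintype X] [Nonempty X]
    (D : Multiset X) (hD : D ≠ 0)
    (Q : Finset (X → ℝ)) (hQne : Q.Nonempty)
    (hQ01 : ∀ q ∈ Q, ∀ x, q x ∈ Set.Icc (0 : ℝ) 1)
    (hQneg : ∀ q ∈ Q, (fun x => 1 - q x) ∈ Q)
    (α : ℝ) (hα : 0 < α)
    (ustar : X → ℝ) (hu0 : ∀ x, 0 ≤ ustar x) (hu1 : ∑ x, ustar x = 1)
    (wstar : {q // q ∈ Q} → ℝ) (hw0 : ∀ q, 0 ≤ wstar q) (hw1 : ∑ q, wstar q = 1)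
    -- `A(u*, w) ≤ v + α` for every mixed query strategy `w`, with `v = 0`:
    (heq1 : ∀ w : {q // q ∈ Q} → ℝ, (∀ q, 0 ≤ w q) → ∑ q, w q = 1 →
      ∑ x : X, ∑ q : {q // q ∈ Q},
        ustar x * w q * ((D.map q.1).sum / D.card - q.1 x) ≤ 0 + α)
    -- `A(u, w*) ≥ v - α` for every mixed data strategy `u`, with `v = 0`:
    (heq2 : ∀ u : X → ℝ, (∀ x, 0 ≤ u x) → ∑ x, u x = 1 →
      ∑ x : X, ∑ q : {q // q ∈ Q},
        u x * wstar q * ((D.map q.1).sum / D.card - q.1 x) ≥ 0 - α) :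
    ∀ q ∈ Q, |(∑ x : X, ustar x * q x) - (D.map q).sum / D.card| ≤ α := by
  intro q hq
  have hcard : (0 : ℝ) < D.card := by
    have : D.card ≠ 0 := by simpa using hD
    positivity
  have h1 := pure_strategy_bound D Q α ustar hu1 heq1 q hq
  have h2 := pure_strategy_bound D Q α ustar hu1 heq1 _ (hQneg q hq)
  have hmapneg : ((D.map fun x => 1 - q x).sum : ℝ) = D.card - (D.map q).sum := by
    induction D using Multiset.induction with
    | empty => simp
    | cons a s ih => simp [ih]; ring
  have hsumneg : ∑ x : X, ustar x * (1 - q x) = 1 - ∑ x : X, ustar x * q x := by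
    simp only [mul_sub, mul_one]
    rw [Finset.sum_sub_distrib, hu1]
  rw [hmapneg, hsumneg] at h2
  have h2' : (∑ x : X, ustar x * q x) - (D.map q).sum / D.card ≤ α := by
    have : ((D.card : ℝ) - (D.map q).sum) / D.card = 1 - (D.map q).sum / D.card := by
      field_simp
    rw [this] at h2; linarith
  rw [abs_le]; constructor <;> linarith
end

section
/- The exponential mechanism, which on input database D outputs r ∈ R with probability proportional to exp(ε·S(D,r)/(2·GS_S)), is ε-differentially private, where GS_S = max over neighboring D, D' and r ∈ R of |S(D,r) - S(D',r)|. -/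
open Finset

/-- The exponential mechanism: given a finite output range `R`, a score function
`S` whose sensitivity (with respect to neighboring databases) is at most `Δ`,
the mechanism that on input `D` outputs `r ∈ R` with probability proportional to
`exp(ε S(D,r) / (2Δ))` is `ε`-differentially private: for all outputs `r` and
neighboring `D, D'`, `Pr[M(D) = r] ≤ e^ε Pr[M(D') = r]`. -/
theorem stmt8 {X R : Type*} [Fintype R] [Nonempty R]
    (Neighbor : Multiset X → Multiset X → Prop)
    (S : Multiset X → R → ℝ) (ε Δ : ℝ) (hε : 0 ≤ ε) (hΔ : 0 < Δ)
    (hsens : ∀ D D', Neighbor D D' → ∀ r : R, |S D r - S D' r| ≤ Δ) :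
    ∀ D D', Neighbor D D' → ∀ r : R,
      Real.exp (ε * S D r / (2 * Δ)) / (∑ r' : R, Real.exp (ε * S D r' / (2 * Δ))) ≤
        Real.exp ε *
          (Real.exp (ε * S D' r / (2 * Δ)) /
            (∑ r' : R, Real.exp (ε * S D' r' / (2 * Δ)))) := by
  intro D D' hN r
  have h2Δ : 0 < 2 * Δ := by linarith
  -- pointwise bound: exp(ε S D r' /(2Δ)) ≤ exp(ε/2) * exp(ε S D' r' /(2Δ))
  have key : ∀ (A B : Multiset X), Neighbor A B → ∀ r' : R,
      Real.exp (ε * S A r' / (2 * Δ)) ≤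
        Real.exp (ε / 2) * Real.exp (ε * S B r' / (2 * Δ)) := by
    intro A B hAB r'
    rw [← Real.exp_add]
    apply Real.exp_le_exp.mpr
    have h1 : S A r' - S B r' ≤ Δ := (abs_le.mp (hsens A B hAB r')).2
    rw [div_le_iff₀ h2Δ, add_mul, div_mul_cancel₀ _ h2Δ.ne']
    nlinarith [mul_le_mul_of_nonneg_left h1 hε]
  have hSymm : ∀ r' : R,
      Real.exp (ε * S D' r' / (2 * Δ)) ≤
        Real.exp (ε / 2) * Real.exp (ε * S D r' / (2 * Δ)) := by
    intro A
    rw [← Real.exp_add]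
    apply Real.exp_le_exp.mpr
    have h1 : S D' A - S D A ≤ Δ := by
      have := (abs_le.mp (hsens D D' hN A)).1; linarith
    rw [div_le_iff₀ h2Δ, add_mul, div_mul_cancel₀ _ h2Δ.ne']
    nlinarith [mul_le_mul_of_nonneg_left h1 hε]
  have hb : 0 < ∑ r' : R, Real.exp (ε * S D r' / (2 * Δ)) :=
    Finset.sum_pos (fun i _ => Real.exp_pos _) Finset.univ_nonempty
  have hd : 0 < ∑ r' : R, Real.exp (ε * S D' r' / (2 * Δ)) :=
    Finset.sum_pos (fun i _ => Real.exp_pos _) Finset.univ_nonempty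
  rw [← mul_div_assoc, div_le_div_iff₀ hb hd]
  have hnum := key D D' hN r
  have hden : (∑ r' : R, Real.exp (ε * S D' r' / (2 * Δ))) ≤
      Real.exp (ε / 2) * ∑ r' : R, Real.exp (ε * S D r' / (2 * Δ)) := by
    rw [Finset.mul_sum]
    exact Finset.sum_le_sum fun i _ => hSymm i
  calc Real.exp (ε * S D r / (2 * Δ)) * ∑ r' : R, Real.exp (ε * S D' r' / (2 * Δ))
      ≤ (Real.exp (ε / 2) * Real.exp (ε * S D' r / (2 * Δ))) *
          (Real.exp (ε / 2) * ∑ r' : R, Real.exp (ε * S D r' / (2 * Δ))) := by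
        apply mul_le_mul hnum hden hd.le
        positivity
    _ = Real.exp ε * Real.exp (ε * S D' r / (2 * Δ)) *
          ∑ r' : R, Real.exp (ε * S D r' / (2 * Δ)) := by
        rw [show Real.exp ε = Real.exp (ε/2) * Real.exp (ε/2) by
          rw [← Real.exp_add]; ring_nf]
        ring
end
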